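/- Let f ∈ L²(𝕋) with ∫_𝕋 f(x) dx ≠ 0. Then the constant function 1 belongs to the closure, in the L²(𝕋) topology, of the linear span of the set of translates { τ_{x₀} f : x₀ ∈ 𝕋 }. -/

import Mathlib

open MeasureTheory Real AddCircle
open scoped ComplexConjugate InnerProductSpace

noncomputable section

instance : Fact ((0:ℝ) < 2 * π) := ⟨by positivity⟩

private lemma Lp_coeFn_finset_sum {α E : Type*} [MeasurableSpace α] {μ : Measure α}
    [NormedAddCommGroup E] {p : ENNReal} {ι : Type*} (s : Finset ι)
    (F : ι → Lp E p μ) (G : ι → α → E) (h : ∀ i ∈ s, ⇑(F i) =ᵐ[μ] G i) :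
    ⇑(∑ i ∈ s, F i) =ᵐ[μ] fun x => ∑ i ∈ s, G i x := by
  classical
  induction s using Finset.induction with
  | empty => simp only [Finset.sum_empty]; exact Lp.coeFn_zero E p μ
  | insert _ _ hi ih =>
    rename_i a s'
    rw [Finset.sum_insert hi]
    refine (Lp.coeFn_add _ _).trans ?_
    have h1 : ⇑(F a) =ᵐ[μ] G a := h a (Finset.mem_insert_self a s')
    have h2 := ih fun i hi' => h i (Finset.mem_insert_of_mem hi')
    filter_upwards [h1, h2] with x hx1 hx2
    simp only [Pi.add_apply, hx1, hx2, Finset.sum_insert hi]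

/-- For `f ∈ L²(𝕋)` with `∫ f ≠ 0`, the constant function `1` belongs to the
`L²` closure of the linear span of the translates of `f`. -/
theorem one_mem_L2_closure_span_translates
    (f : AddCircle (2 * π) → ℂ) (hf : MemLp f 2 haarAddCircle)
    (hf0 : (∫ x, f x ∂haarAddCircle) ≠ 0) :
    ∀ ε : ℝ, 0 < ε →
      ∃ (s : Finset (AddCircle (2 * π))) (c : AddCircle (2 * π) → ℂ),
        eLpNorm (fun x => (1 : ℂ) - ∑ x₀ ∈ s, c x₀ * f (x - x₀)) 2 haarAddCircle
          < ENNReal.ofReal ε := by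
  intro ε hε
  set μ : Measure (AddCircle (2 * π)) := haarAddCircle with hμdef
  have hmp : ∀ x₀ : AddCircle (2 * π), MeasurePreserving (fun x => x - x₀) μ μ :=
    fun x₀ => measurePreserving_sub_right μ x₀
  have hTmem : ∀ x₀ : AddCircle (2 * π), MemLp (fun x => f (x - x₀)) 2 μ :=
    fun x₀ => hf.comp_measurePreserving (hmp x₀)
  set T : AddCircle (2 * π) → Lp ℂ 2 μ := fun x₀ => (hTmem x₀).toLp _ with hTdef
  set S : Submodule ℂ (Lp ℂ 2 μ) := Submodule.span ℂ (Set.range T) with hSdef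
  have h1mem : MemLp (fun _ : AddCircle (2 * π) => (1 : ℂ)) 2 μ := memLp_const 1
  set oneL : Lp ℂ 2 μ := h1mem.toLp _ with honedef
  have f_int : Integrable f μ := hf.integrable one_le_two
  -- main claim: oneL ∈ closure of S
  have key : oneL ∈ S.topologicalClosure := by
    rw [← Submodule.orthogonal_orthogonal_eq_closure, Submodule.mem_orthogonal]
    intro g hg
    have g_int : Integrable (⇑g) μ := (Lp.memLp g).integrable one_le_two
    -- the inner products of translates with g vanish
    have hTg : ∀ x₀, (∫ x, conj (f (x - x₀)) * g x ∂μ) = 0 := by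
      intro x₀
      have hmem : T x₀ ∈ S := Submodule.subset_span ⟨x₀, rfl⟩
      have h0 : ⟪T x₀, g⟫_ℂ = 0 := hg (T x₀) hmem
      rw [L2.inner_def] at h0
      rw [← h0]
      refine integral_congr_ae ?_
      filter_upwards [(hTmem x₀).coeFn_toLp] with x hx
      simp [RCLike.inner_apply, hTdef, hx, mul_comm]
    -- Fubini setup
    set φ : AddCircle (2 * π) × AddCircle (2 * π) → ℂ :=
      fun q => conj (f q.1) * g q.2 with hφdef
    set Ψ : AddCircle (2 * π) × AddCircle (2 * π) → AddCircle (2 * π) × AddCircle (2 * π) :=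
      fun z => (z.2 - z.1, z.2) with hΨdef
    have hΨmp : MeasurePreserving Ψ (μ.prod μ) (μ.prod μ) := by
      have hA : MeasurePreserving (fun z : AddCircle (2 * π) × AddCircle (2 * π) =>
          (z.1, z.2 - z.1)) (μ.prod μ) (μ.prod μ) := measurePreserving_prod_sub μ μ
      have hB : MeasurePreserving (fun z : AddCircle (2 * π) × AddCircle (2 * π) =>
          (z.2, z.1 + z.2)) (μ.prod μ) (μ.prod μ) := measurePreserving_prod_add_swap_right μ μ
      have hcomp := hB.comp hA
      convert hcomp using 1
      funext z
      show (z.2 - z.1, z.2) = (z.2 - z.1, z.1 + (z.2 - z.1))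
      congr 1
      abel
    have hconj_int : Integrable (fun x => conj (f x)) μ := by
      have := (Complex.conjLIE.integrable_comp_iff (φ := f) (μ := μ)).mpr f_int
      simpa using this
    have hφ_int : Integrable φ (μ.prod μ) := hconj_int.mul_prod g_int
    have hh_int : Integrable (φ ∘ Ψ) (μ.prod μ) :=
      (hΨmp.integrable_comp hφ_int.aestronglyMeasurable).2 hφ_int
    -- compute the product integral in two ways
    have e1 : ∫ z, (φ ∘ Ψ) z ∂(μ.prod μ) = 0 := by
      rw [integral_prod _ hh_int]
      have h0 : ∀ x₀, (∫ x, φ (Ψ (x₀, x)) ∂μ) = 0 := by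
        intro x₀
        simpa [hφdef, hΨdef, Function.comp] using hTg x₀
      simp only [Function.comp, h0, integral_zero]
    have e2 : ∫ z, (φ ∘ Ψ) z ∂(μ.prod μ) = conj (∫ x, f x ∂μ) * ∫ x, g x ∂μ := by
      have hmeas : AEStronglyMeasurable φ (Measure.map Ψ (μ.prod μ)) := by
        rw [hΨmp.map_eq]; exact hφ_int.aestronglyMeasurable
      have hmap := integral_map (f := φ) hΨmp.measurable.aemeasurable hmeas
      rw [hΨmp.map_eq] at hmap
      have : ∫ z, (φ ∘ Ψ) z ∂(μ.prod μ) = ∫ z, φ z ∂(μ.prod μ) := hmap.symm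
      rw [this]
      have h2 := integral_prod_mul (μ := μ) (ν := μ) (fun x => conj (f x)) (fun x => g x)
      rw [integral_conj] at h2
      exact h2
    have hg0 : (∫ x, g x ∂μ) = 0 := by
      have := e1.symm.trans e2
      rcases mul_eq_zero.mp this.symm with h | h
      · exact absurd h (by simpa using hf0)
      · exact h
    -- conclude inner product with oneL is zero
    rw [L2.inner_def]
    have : ∫ x, ⟪g x, oneL x⟫_ℂ ∂μ = ∫ x, conj (g x) ∂μ := by
      refine integral_congr_ae ?_
      filter_upwards [h1mem.coeFn_toLp] with x hx
      simp [RCLike.inner_apply, honedef, hx]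
    rw [this, integral_conj, hg0, map_zero]
  -- extract an approximation
  have hclosure : oneL ∈ closure (S : Set (Lp ℂ 2 μ)) := key
  obtain ⟨y, hyS, hyd⟩ := Metric.mem_closure_iff.mp hclosure ε hε
  rw [hSdef] at hyS
  obtain ⟨c, hc⟩ := Finsupp.mem_span_range_iff_exists_finsupp.mp hyS
  refine ⟨c.support, ⇑c, ?_⟩
  have hysum : y = ∑ x₀ ∈ c.support, c x₀ • T x₀ := by
    rw [← hc]; rfl
  -- a.e. identification of the function in the statement
  have hae : (fun x => (1 : ℂ) - ∑ x₀ ∈ c.support, c x₀ * f (x - x₀)) =ᵐ[μ] ⇑(oneL - y) := by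
    have hsum : ⇑(∑ x₀ ∈ c.support, c x₀ • T x₀) =ᵐ[μ]
        fun x => ∑ x₀ ∈ c.support, c x₀ * f (x - x₀) := by
      refine Lp_coeFn_finset_sum _ _ _ ?_
      intro i _
      filter_upwards [Lp.coeFn_smul (c i) (T i), (hTmem i).coeFn_toLp] with x hx1 hx2
      rw [hx1, Pi.smul_apply, smul_eq_mul]; exact congrArg _ hx2
    filter_upwards [Lp.coeFn_sub oneL y, h1mem.coeFn_toLp, hysum ▸ hsum] with x hx1 hx2 hx3
    have h1' : (⇑oneL : AddCircle (2 * π) → ℂ) x = 1 := hx2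
    rw [hx1, Pi.sub_apply, h1', hx3]
  rw [eLpNorm_congr_ae hae]
  have hne : eLpNorm (⇑(oneL - y)) 2 μ ≠ ⊤ := Lp.eLpNorm_ne_top _
  rw [ENNReal.lt_ofReal_iff_toReal_lt hne]
  have : dist oneL y = (eLpNorm (⇑(oneL - y)) 2 μ).toReal := by
    rw [dist_eq_norm, Lp.norm_def]
  linarith [hyd, this ▸ hyd]
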